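/- Let c₁ = 355.03, c₂ = −68.19, c₃ = 791.32, let V(φ) = c₁(1 + cos φ) + c₂(1 − cos 2φ) + c₃(1 + cos 3φ), and for n ≥ 1 define fₙ : (Fin n → ℝ) → ℝ by fₙ(φ₁, …, φₙ) = Σᵢ V(φᵢ). Then for every 0 ≤ k ≤ n, the set of critical points x of fₙ in [0, 2π)ⁿ for which exactly k coordinates i satisfy V″(xᵢ) < 0 (i.e., the critical points of Morse index k) is finite and has exactly 3ⁿ · C(n, k) elements, where C(n, k) is the binomial coefficient. -/

import Mathlib

open Real

/-- The butane dihedral potential (energies in units of k_B·K). -/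
noncomputable def V (φ : ℝ) : ℝ :=
  355.03 * (1 + Real.cos φ) + (-68.19) * (1 - Real.cos (2 * φ)) +
    791.32 * (1 + Real.cos (3 * φ))

noncomputable def Qp (t : ℝ) : ℝ := 9495.84*t^2 + 272.76*t - 2018.93

lemma hasDerivV (φ : ℝ) : HasDerivAt V (-(Real.sin φ) * Qp (Real.cos φ)) φ := by
  have h1 : HasDerivAt (fun x : ℝ => 2*x) 2 φ := by
    simpa using (hasDerivAt_id φ).const_mul (2:ℝ)
  have h3 : HasDerivAt (fun x : ℝ => 3*x) 3 φ := by
    simpa using (hasDerivAt_id φ).const_mul (3:ℝ)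
  have hc2 : HasDerivAt (fun x : ℝ => Real.cos (2*x)) (-Real.sin (2*φ) * 2) φ :=
    (Real.hasDerivAt_cos (2*φ)).comp φ h1
  have hc3 : HasDerivAt (fun x : ℝ => Real.cos (3*x)) (-Real.sin (3*φ) * 3) φ :=
    (Real.hasDerivAt_cos (3*φ)).comp φ h3
  have h : HasDerivAt V
      (355.03 * (0 + -Real.sin φ) + (-68.19) * (0 - (-Real.sin (2*φ) * 2)) +
        791.32 * (0 + -Real.sin (3*φ) * 3)) φ := by
    exact ((((hasDerivAt_const φ (1:ℝ)).add (Real.hasDerivAt_cos φ)).const_mul 355.03).add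
      (((hasDerivAt_const φ (1:ℝ)).sub hc2).const_mul (-68.19))).add
      (((hasDerivAt_const φ (1:ℝ)).add hc3).const_mul 791.32)
  convert h using 1
  rw [Real.sin_two_mul, Real.sin_three_mul, Qp]
  linear_combination (-9495.84 * Real.sin φ) * (Real.sin_sq_add_cos_sq φ)

lemma derivV : deriv V = fun φ => -(Real.sin φ) * Qp (Real.cos φ) :=
  funext fun φ => (hasDerivV φ).deriv

lemma hasDeriv2V (φ : ℝ) : HasDerivAt (deriv V)
    (-(Real.cos φ) * Qp (Real.cos φ) +
      (Real.sin φ)^2 * (18991.68 * Real.cos φ + 272.76)) φ := by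
  rw [derivV]
  have hq : HasDerivAt (fun x : ℝ => Qp (Real.cos x))
      ((18991.68 * Real.cos φ + 272.76) * (-Real.sin φ)) φ := by
    have : HasDerivAt Qp (18991.68 * Real.cos φ + 272.76) (Real.cos φ) := by
      unfold Qp
      have := (((hasDerivAt_pow 2 (Real.cos φ)).const_mul (9495.84:ℝ)).add
        ((hasDerivAt_id (Real.cos φ)).const_mul (272.76:ℝ))).sub
        (hasDerivAt_const (Real.cos φ) (2018.93:ℝ))
      exact this.congr_deriv (by norm_num <;> ring)
    exact this.comp φ (Real.hasDerivAt_cos φ)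
  have h := ((Real.hasDerivAt_sin φ).neg.mul hq)
  exact h.congr_deriv (by simp only [Pi.neg_apply]; ring)

noncomputable def sD : ℝ := Real.sqrt (272.76^2 + 4*9495.84*2018.93)
noncomputable def tp : ℝ := (-272.76 + sD)/18991.68
noncomputable def tm : ℝ := (-272.76 - sD)/18991.68

lemma sD_sq : sD^2 = 272.76^2 + 4*9495.84*2018.93 := by
  rw [sD, Real.sq_sqrt]; norm_num

lemma sD_gt : 8761 < sD := by
  rw [sD]
  have : (8761:ℝ) = Real.sqrt (8761^2) := by
    rw [Real.sqrt_sq]; norm_num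
  rw [this]
  apply Real.sqrt_lt_sqrt (by positivity)
  norm_num

lemma sD_lt : sD < 8762 := by
  rw [sD]
  have : (8762:ℝ) = Real.sqrt (8762^2) := by
    rw [Real.sqrt_sq]; norm_num
  rw [this]
  apply Real.sqrt_lt_sqrt (by positivity)
  norm_num

lemma tp_pos : 0 < tp := by
  rw [tp]; have := sD_gt; linarith [div_pos (by linarith : (0:ℝ) < -272.76 + sD) (by norm_num : (0:ℝ) < 18991.68)]

lemma tp_lt_one : tp < 1 := by
  rw [tp]; rw [div_lt_one (by norm_num : (0:ℝ) < 18991.68)]; have := sD_lt; linarith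

lemma tm_neg : tm < 0 := by
  rw [tm]
  apply div_neg_of_neg_of_pos _ (by norm_num)
  have := sD_gt; linarith

lemma tm_gt_neg_one : -1 < tm := by
  rw [tm, lt_div_iff₀ (by norm_num : (0:ℝ) < 18991.68)]
  have := sD_lt; linarith

lemma Qfact (t : ℝ) : Qp t = 9495.84 * (t - tp) * (t - tm) := by
  rw [Qp, tp, tm]
  field_simp
  linear_combination (9495.84:ℝ) * sD_sq


lemma Qzero_iff (t : ℝ) : Qp t = 0 ↔ t = tp ∨ t = tm := by
  rw [Qfact]
  constructor
  · intro h
    rcases mul_eq_zero.1 h with h | h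
    · rcases mul_eq_zero.1 h with h | h
      · norm_num at h
      · left; linarith
    · right; linarith
  · rintro (rfl | rfl) <;> ring

lemma Qp_tp : Qp tp = 0 := by rw [Qfact]; ring
lemma Qp_tm : Qp tm = 0 := by rw [Qfact]; ring
lemma Qp_one : (0:ℝ) < Qp 1 := by rw [Qp]; norm_num
lemma Qp_neg_one : (0:ℝ) < Qp (-1) := by rw [Qp]; norm_num

lemma dQ_tp : 18991.68 * tp + 272.76 = sD := by rw [tp]; field_simp; ring
lemma dQ_tm : 18991.68 * tm + 272.76 = -sD := by rw [tm]; field_simp; ring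

noncomputable def ap : ℝ := Real.arccos tp
noncomputable def am : ℝ := Real.arccos tm

lemma cos_ap : Real.cos ap = tp := Real.cos_arccos (by have := tm_gt_neg_one; have := tm_neg; have := tp_pos; linarith) tp_lt_one.le
lemma cos_am : Real.cos am = tm := Real.cos_arccos tm_gt_neg_one.le (by have := tm_neg; linarith)

lemma ap_pos : 0 < ap := Real.arccos_pos.2 tp_lt_one
lemma ap_lt_pi : ap < π := by
  rcases lt_or_eq_of_le (Real.arccos_le_pi tp) with h | h
  · exact h
  · exfalso; have := Real.arccos_eq_pi.1 h; have := tp_pos; linarith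
lemma am_pos : 0 < am := Real.arccos_pos.2 (by have := tm_neg; linarith)
lemma am_lt_pi : am < π := by
  rcases lt_or_eq_of_le (Real.arccos_le_pi tm) with h | h
  · exact h
  · exfalso; have := Real.arccos_eq_pi.1 h; have := tm_gt_neg_one; linarith

lemma ap_lt_am : ap < am := by
  have h1 := tm_gt_neg_one; have h2 := tm_neg; have h3 := tp_pos; have h4 := tp_lt_one
  exact Real.strictAntiOn_arccos ⟨by linarith, by linarith⟩ ⟨by linarith, by linarith⟩ (by linarith)

lemma sin_ap_pos : 0 < Real.sin ap := Real.sin_pos_of_pos_of_lt_pi ap_pos ap_lt_pi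
lemma sin_am_pos : 0 < Real.sin am := Real.sin_pos_of_pos_of_lt_pi am_pos am_lt_pi

lemma pi_pos' : (0:ℝ) < π := Real.pi_pos

/-- ordering of the six critical points -/
lemma chain : 0 < ap ∧ ap < am ∧ am < π ∧ π < 2*π - am ∧ 2*π - am < 2*π - ap ∧
    2*π - ap < 2*π := by
  refine ⟨ap_pos, ap_lt_am, am_lt_pi, by linarith [am_lt_pi], by linarith [ap_lt_am], by linarith [ap_pos]⟩

lemma crit_iff {φ : ℝ} (h0 : 0 ≤ φ) (h2 : φ < 2*π) :
    deriv V φ = 0 ↔ φ = 0 ∨ φ = ap ∨ φ = am ∨ φ = π ∨ φ = 2*π - am ∨ φ = 2*π - ap := by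
  rw [derivV]
  constructor
  · intro h
    rcases mul_eq_zero.1 h with h | h
    · -- sin φ = 0
      have hs : Real.sin φ = 0 := by linarith [neg_eq_zero.1 h]
      rw [Real.sin_eq_zero_iff] at hs
      obtain ⟨m, hm⟩ := hs
      have hπ := Real.pi_pos
      have hm0 : (0:ℤ) ≤ m := by
        by_contra hc
        push_neg at hc
        have : (m:ℝ) ≤ -1 := by
          have : m ≤ -1 := by omega
          exact_mod_cast this
        nlinarith
      have hm2 : m < 2 := by
        by_contra hc
        push_neg at hc
        have : (2:ℝ) ≤ (m:ℝ) := by exact_mod_cast hc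
        nlinarith
      interval_cases m <;> push_cast at hm
      · left; linarith
      · right; right; right; left; linarith
    · rcases (Qzero_iff _).1 h with h | h
      · -- cos φ = tp
        rcases le_or_gt φ π with hle | hlt
        · right; left
          have := Real.arccos_cos h0 hle
          rw [h] at this; rw [ap, ← this]
        · right; right; right; right; right
          have h0' : 0 ≤ 2*π - φ := by linarith
          have h1' : 2*π - φ ≤ π := by linarith
          have hc : Real.cos (2*π - φ) = Real.cos φ := by
            rw [Real.cos_sub, Real.cos_two_pi, Real.sin_two_pi]; ring
          have := Real.arccos_cos h0' h1'
          rw [hc, h] at this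
          rw [ap, this]; ring
      · rcases le_or_gt φ π with hle | hlt
        · right; right; left
          have := Real.arccos_cos h0 hle
          rw [h] at this; rw [am, ← this]
        · right; right; right; right; left
          have h0' : 0 ≤ 2*π - φ := by linarith
          have h1' : 2*π - φ ≤ π := by linarith
          have hc : Real.cos (2*π - φ) = Real.cos φ := by
            rw [Real.cos_sub, Real.cos_two_pi, Real.sin_two_pi]; ring
          have := Real.arccos_cos h0' h1'
          rw [hc, h] at this
          rw [am, this]; ring
  · have hc2 : ∀ a : ℝ, Real.cos (2*π - a) = Real.cos a := fun a => by
      rw [Real.cos_sub, Real.cos_two_pi, Real.sin_two_pi]; ring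
    rintro (rfl | rfl | rfl | rfl | rfl | rfl) <;> show -Real.sin _ * Qp (Real.cos _) = 0
    · simp
    · rw [cos_ap, Qp_tp]; ring
    · rw [cos_am, Qp_tm]; ring
    · simp
    · rw [hc2, cos_am, Qp_tm]; ring
    · rw [hc2, cos_ap, Qp_tp]; ring

lemma d2 (φ : ℝ) : deriv (deriv V) φ =
    -(Real.cos φ) * Qp (Real.cos φ) + (Real.sin φ)^2 * (18991.68 * Real.cos φ + 272.76) :=
  (hasDeriv2V φ).deriv

lemma d2_zero : deriv (deriv V) 0 < 0 := by
  rw [d2]; simp; have := Qp_one; linarith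

lemma d2_pi : 0 < deriv (deriv V) π := by
  rw [d2]; simp; have := Qp_neg_one; linarith

lemma cos_tps (a : ℝ) : Real.cos (2*π - a) = Real.cos a := by
  rw [Real.cos_sub, Real.cos_two_pi, Real.sin_two_pi]; ring

lemma sin_tps (a : ℝ) : Real.sin (2*π - a) = -Real.sin a := by
  rw [Real.sin_sub, Real.cos_two_pi, Real.sin_two_pi]; ring

lemma sD_pos : 0 < sD := lt_trans (by norm_num) sD_gt

lemma d2_ap : 0 < deriv (deriv V) ap := by
  rw [d2, cos_ap, Qp_tp, dQ_tp]
  nlinarith [mul_pos (mul_pos sin_ap_pos sin_ap_pos) sD_pos]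

lemma d2_ap' : 0 < deriv (deriv V) (2*π - ap) := by
  rw [d2, cos_tps, sin_tps, cos_ap, Qp_tp, dQ_tp]
  nlinarith [mul_pos (mul_pos sin_ap_pos sin_ap_pos) sD_pos]

lemma d2_am : deriv (deriv V) am < 0 := by
  rw [d2, cos_am, Qp_tm, dQ_tm]
  nlinarith [mul_pos (mul_pos sin_am_pos sin_am_pos) sD_pos]

lemma d2_am' : deriv (deriv V) (2*π - am) < 0 := by
  rw [d2, cos_tps, sin_tps, cos_am, Qp_tm, dQ_tm]
  nlinarith [mul_pos (mul_pos sin_am_pos sin_am_pos) sD_pos]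

lemma fderiv_sum_eq_zero_iff {n : ℕ} (x : Fin n → ℝ) :
    fderiv ℝ (fun y : Fin n → ℝ => ∑ i, V (y i)) x = 0 ↔ ∀ i, deriv V (x i) = 0 := by
  have hco : ∀ i : Fin n, HasFDerivAt (fun y : Fin n → ℝ => V (y i))
      ((ContinuousLinearMap.smulRight (1 : ℝ →L[ℝ] ℝ) (deriv V (x i))).comp
        (ContinuousLinearMap.proj i)) x := by
    intro i
    have h1 : HasDerivAt V (deriv V (x i)) (x i) := by
      have := hasDerivV (x i)
      rwa [derivV]
    have h2 : HasFDerivAt (fun y : Fin n → ℝ => y i)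
        (ContinuousLinearMap.proj i : (Fin n → ℝ) →L[ℝ] ℝ) x :=
      (ContinuousLinearMap.proj i : (Fin n → ℝ) →L[ℝ] ℝ).hasFDerivAt
    exact h1.hasFDerivAt.comp x h2
  have hF : HasFDerivAt (fun y : Fin n → ℝ => ∑ i, V (y i))
      (∑ i, (ContinuousLinearMap.smulRight (1 : ℝ →L[ℝ] ℝ) (deriv V (x i))).comp
        (ContinuousLinearMap.proj i)) x :=
    HasFDerivAt.fun_sum (fun i _ => hco i)
  rw [hF.fderiv]
  constructor
  · intro h j
    have := congrArg (fun L : (Fin n → ℝ) →L[ℝ] ℝ => L (Pi.single j 1)) h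
    simpa [ContinuousLinearMap.sum_apply, Pi.single_apply, Finset.sum_ite_eq',
      ContinuousLinearMap.comp_apply, ContinuousLinearMap.proj_apply] using this
  · intro h
    ext v
    simp [ContinuousLinearMap.sum_apply, ContinuousLinearMap.comp_apply, h]

lemma count_lemma {α : Type*} [DecidableEq α] (A B : Finset α) (hd : Disjoint A B)
    (n k : ℕ) :
    ((Fintype.piFinset fun _ : Fin n => A ∪ B).filter
      fun x => (Finset.univ.filter fun i => x i ∈ B).card = k).card
      = n.choose k * B.card ^ k * A.card ^ (n - k) := by
  classical
  set s := (Fintype.piFinset fun _ : Fin n => A ∪ B).filter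
      (fun x => (Finset.univ.filter fun i => x i ∈ B).card = k) with hs
  have hmap : ∀ x ∈ s, (Finset.univ.filter fun i => x i ∈ B) ∈
      Finset.powersetCard k (Finset.univ : Finset (Fin n)) := by
    intro x hx
    rw [Finset.mem_powersetCard]
    exact ⟨Finset.filter_subset _ _, (Finset.mem_filter.1 hx).2⟩
  rw [Finset.card_eq_sum_card_fiberwise hmap]
  have hfib : ∀ s0 ∈ Finset.powersetCard k (Finset.univ : Finset (Fin n)),
      (s.filter fun x => (Finset.univ.filter fun i => x i ∈ B) = s0).card
        = B.card ^ k * A.card ^ (n - k) := by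
    intro s0 hs0
    rw [Finset.mem_powersetCard] at hs0
    have hcard := hs0.2
    have : (s.filter fun x => (Finset.univ.filter fun i => x i ∈ B) = s0)
        = Fintype.piFinset (fun i => if i ∈ s0 then B else A) := by
      ext x
      simp only [hs, Finset.mem_filter, Fintype.mem_piFinset]
      constructor
      · rintro ⟨⟨h1, -⟩, h3⟩
        intro i
        by_cases hi : i ∈ s0
        · rw [if_pos hi]
          rw [← h3] at hi
          exact (Finset.mem_filter.1 hi).2
        · rw [if_neg hi]
          rcases Finset.mem_union.1 (h1 i) with h | h
          · exact h
          · exfalso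
            exact hi (h3 ▸ Finset.mem_filter.2 ⟨Finset.mem_univ i, h⟩)
      · intro h
        have h1 : ∀ i, x i ∈ A ∪ B := by
          intro i
          rcases em (i ∈ s0) with hi | hi
          · exact Finset.mem_union.2 (Or.inr (by simpa [if_pos hi] using h i))
          · exact Finset.mem_union.2 (Or.inl (by simpa [if_neg hi] using h i))
        have h3 : (Finset.univ.filter fun i => x i ∈ B) = s0 := by
          ext i
          simp only [Finset.mem_filter, Finset.mem_univ, true_and]
          constructor
          · intro hB
            by_contra hi
            have hA : x i ∈ A := by simpa [if_neg hi] using h i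
            exact (Finset.disjoint_left.1 hd hA) hB
          · intro hi
            simpa [if_pos hi] using h i
        exact ⟨⟨h1, by rw [h3, hcard]⟩, h3⟩
    refine (congrArg Finset.card this).trans ?_
    rw [Fintype.card_piFinset]
    have : ∀ i : Fin n, (if i ∈ s0 then B else A).card = if i ∈ s0 then B.card else A.card :=
      fun i => apply_ite Finset.card _ _ _
    rw [Finset.prod_congr rfl (fun i _ => this i), Finset.prod_ite, Finset.prod_const,
      Finset.prod_const]
    have e1 : (Finset.univ.filter fun i => i ∈ s0) = s0 := by
      ext i; simp
    have e2 : (Finset.univ.filter fun i => i ∉ s0) = s0ᶜ := by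
      ext i; simp
    rw [e1, e2, hcard, Finset.card_compl, Fintype.card_fin, hcard]
  refine (Finset.sum_congr rfl hfib).trans ?_
  rw [Finset.sum_const, Finset.card_powersetCard,
    Finset.card_univ, Fintype.card_fin, smul_eq_mul, mul_assoc]

noncomputable def Sneg : Finset ℝ := {0, am, 2*π - am}
noncomputable def Spos : Finset ℝ := {π, ap, 2*π - ap}

lemma card_Sneg : Sneg.card = 3 := by
  obtain ⟨h1, h2, h3, h4, h5, h6⟩ := chain
  have hπ := Real.pi_pos
  rw [Sneg]
  rw [Finset.card_insert_of_notMem, Finset.card_insert_of_notMem, Finset.card_singleton]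
  · simp only [Finset.mem_singleton]; intro h; linarith
  · simp only [Finset.mem_insert, Finset.mem_singleton, not_or]
    exact ⟨by intro h; linarith, by intro h; linarith⟩

lemma card_Spos : Spos.card = 3 := by
  obtain ⟨h1, h2, h3, h4, h5, h6⟩ := chain
  have hπ := Real.pi_pos
  rw [Spos]
  rw [Finset.card_insert_of_notMem, Finset.card_insert_of_notMem, Finset.card_singleton]
  · simp only [Finset.mem_singleton]; intro h; linarith
  · simp only [Finset.mem_insert, Finset.mem_singleton, not_or]
    exact ⟨by intro h; linarith, by intro h; linarith⟩

lemma disj : Disjoint Spos Sneg := by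
  obtain ⟨h1, h2, h3, h4, h5, h6⟩ := chain
  have hπ := Real.pi_pos
  rw [Spos, Sneg, Finset.disjoint_left]
  intro a ha hb
  simp only [Finset.mem_insert, Finset.mem_singleton] at ha hb
  rcases ha with rfl | rfl | rfl <;> rcases hb with h | h | h <;> linarith

lemma mem_union_iff (φ : ℝ) :
    (φ ∈ Set.Ico (0:ℝ) (2*π) ∧ deriv V φ = 0) ↔ φ ∈ Spos ∪ Sneg := by
  obtain ⟨h1, h2, h3, h4, h5, h6⟩ := chain
  have hπ := Real.pi_pos
  simp only [Spos, Sneg, Finset.mem_union, Finset.mem_insert, Finset.mem_singleton,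
    Set.mem_Ico]
  constructor
  · rintro ⟨⟨hl, hr⟩, hd⟩
    rcases (crit_iff hl hr).1 hd with h | h | h | h | h | h <;> tauto
  · intro h
    have hmem : 0 ≤ φ ∧ φ < 2*π := by
      rcases h with (rfl | rfl | rfl) | (rfl | rfl | rfl) <;>
        constructor <;> linarith
    refine ⟨⟨hmem.1, hmem.2⟩, (crit_iff hmem.1 hmem.2).2 ?_⟩
    tauto

lemma neg_iff {φ : ℝ} (h : φ ∈ Spos ∪ Sneg) :
    deriv (deriv V) φ < 0 ↔ φ ∈ Sneg := by
  obtain ⟨h1, h2, h3, h4, h5, h6⟩ := chain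
  have hπ := Real.pi_pos
  simp only [Spos, Sneg, Finset.mem_union, Finset.mem_insert, Finset.mem_singleton] at h ⊢
  rcases h with (rfl | rfl | rfl) | (rfl | rfl | rfl)
  · constructor
    · intro hd; exfalso; linarith [d2_pi]
    · rintro (h | h | h) <;> linarith
  · constructor
    · intro hd; exfalso; linarith [d2_ap]
    · rintro (h | h | h) <;> linarith
  · constructor
    · intro hd; exfalso; linarith [d2_ap']
    · rintro (h | h | h) <;> linarith
  · simp [d2_zero]
  · simp [d2_am]
  · simp [d2_am']


/-- The alkane landscape `fₙ(φ₁, …, φₙ) = Σᵢ V(φᵢ)` has exactly `3ⁿ · C(n, k)`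
critical points of Morse index `k` in the fundamental domain `[0, 2π)ⁿ`, the
Morse index being the number of coordinates with `V″(xᵢ) < 0`. -/
theorem alkane_critical_points_of_index (n : ℕ) (hn : 1 ≤ n) (k : ℕ) (hk : k ≤ n) :
    {x : Fin n → ℝ | (∀ i, x i ∈ Set.Ico (0 : ℝ) (2 * π)) ∧
      fderiv ℝ (fun y : Fin n → ℝ => ∑ i, V (y i)) x = 0 ∧
      (Finset.univ.filter fun i => deriv (deriv V) (x i) < 0).card = k}.Finite ∧
    {x : Fin n → ℝ | (∀ i, x i ∈ Set.Ico (0 : ℝ) (2 * π)) ∧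
      fderiv ℝ (fun y : Fin n → ℝ => ∑ i, V (y i)) x = 0 ∧
      (Finset.univ.filter fun i => deriv (deriv V) (x i) < 0).card = k}.ncard =
      3 ^ n * n.choose k := by
  classical
  set Z : Finset (Fin n → ℝ) :=
    (Fintype.piFinset fun _ : Fin n => Spos ∪ Sneg).filter
      (fun x => (Finset.univ.filter fun i => x i ∈ Sneg).card = k) with hZ
  have key : ∀ x : Fin n → ℝ,
      ((∀ i, x i ∈ Set.Ico (0:ℝ) (2*π)) ∧
        fderiv ℝ (fun y : Fin n → ℝ => ∑ i, V (y i)) x = 0) ↔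
      ∀ i, x i ∈ Spos ∪ Sneg := by
    intro x
    rw [fderiv_sum_eq_zero_iff]
    constructor
    · rintro ⟨ha, hb⟩ i
      exact (mem_union_iff _).1 ⟨ha i, hb i⟩
    · intro h
      exact ⟨fun i => ((mem_union_iff _).2 (h i)).1,
        fun i => ((mem_union_iff _).2 (h i)).2⟩
  have key2 : ∀ x : Fin n → ℝ, (∀ i, x i ∈ Spos ∪ Sneg) →
      (Finset.univ.filter fun i => deriv (deriv V) (x i) < 0)
        = (Finset.univ.filter fun i => x i ∈ Sneg) := by
    intro x hx
    apply Finset.filter_congr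
    intro i _
    simp [neg_iff (hx i)]
  have hset : {x : Fin n → ℝ | (∀ i, x i ∈ Set.Ico (0 : ℝ) (2 * π)) ∧
      fderiv ℝ (fun y : Fin n → ℝ => ∑ i, V (y i)) x = 0 ∧
      (Finset.univ.filter fun i => deriv (deriv V) (x i) < 0).card = k} = ↑Z := by
    ext x
    simp only [Set.mem_setOf_eq, hZ, Finset.coe_filter, Fintype.mem_piFinset]
    constructor
    · rintro ⟨h1, h2, h3⟩
      have hx := (key x).1 ⟨h1, h2⟩
      exact ⟨hx, by rw [← key2 x hx]; exact h3⟩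
    · rintro ⟨hx, h3⟩
      obtain ⟨h1, h2⟩ := (key x).2 hx
      exact ⟨h1, h2, by rw [key2 x hx]; exact h3⟩
  rw [hset]
  refine ⟨Z.finite_toSet, ?_⟩
  rw [Set.ncard_coe_finset]
  have hc : Z.card = n.choose k * Sneg.card ^ k * Spos.card ^ (n - k) := by
    rw [hZ]
    exact count_lemma Spos Sneg disj n k
  rw [hc, card_Sneg, card_Spos, mul_assoc, ← pow_add, Nat.add_sub_cancel' hk,
    mul_comm]
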